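/- Let (X, d_X) be an E_X-valued ultrametric space, (Y, d_Y) an E_Y-valued ultrametric space, and (f, φ) a dc-embedding from X to Y. Assume Y is precise (d_Y : Y × Y → E_Y is surjective) and that the image f[X] is dense in Y, i.e., for every y ∈ Y and every r ∈ E_Y with r > 0 there is x ∈ X with d_Y(f(x), y) < r. Then φ : E_X → E_Y is surjective, and hence an order isomorphism of E_X onto E_Y. -/
import Mathlib

/-- An `E`-valued ultrametric on `X`, where `E` is a linear order whose least element
`⊥` plays the role of `0`. -/
def IsUltrametric {X E : Type*} [LinearOrder E] [OrderBot E] (d : X → X → E) : Prop :=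
  (∀ x y, d x y = ⊥ ↔ x = y) ∧ (∀ x y, d x y = d y x) ∧
  (∀ x y z, d x z ≤ max (d x y) (d y z))

/-- If `(f, φ)` is a dc-embedding into a precise ultrametric space `Y` with dense image,
then the distance part `φ` is surjective, and hence an order isomorphism of the
distance sets. -/
theorem stmt7 {X Y EX EY : Type*} [LinearOrder EX] [OrderBot EX]
    [LinearOrder EY] [OrderBot EY]
    (dX : X → X → EX) (dY : Y → Y → EY)
    (hdX : IsUltrametric dX) (hdY : IsUltrametric dY)
    (f : X → Y) (hf : Function.Injective f)
    (φ : EX ↪o EY) (hφ0 : φ ⊥ = ⊥)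
    (hcompat : ∀ x x' : X, dY (f x) (f x') = φ (dX x x'))
    (hprecise : Function.Surjective (fun p : Y × Y => dY p.1 p.2))
    (hdense : ∀ (y : Y) (r : EY), ⊥ < r → ∃ x : X, dY (f x) y < r) :
    Function.Surjective ⇑φ ∧ ∃ ψ : EX ≃o EY, ∀ r : EX, ψ r = φ r := by
  obtain ⟨h0, hsymm, htri⟩ := hdY
  have hsurj : Function.Surjective ⇑φ := by
    intro e
    rcases eq_or_lt_of_le (bot_le : ⊥ ≤ e) with he | he
    · exact ⟨⊥, he ▸ hφ0⟩
    obtain ⟨⟨y1, y2⟩, hy⟩ := hprecise e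
    simp only at hy
    obtain ⟨x1, hx1⟩ := hdense y1 e he
    obtain ⟨x2, hx2⟩ := hdense y2 e he
    refine ⟨dX x1 x2, ?_⟩
    rw [← hcompat]
    have hle : dY (f x1) (f x2) ≤ e := by
      calc dY (f x1) (f x2) ≤ max (dY (f x1) y1) (dY y1 (f x2)) := htri _ _ _
        _ ≤ max (dY (f x1) y1) (max (dY y1 y2) (dY y2 (f x2))) := by
            exact max_le_max le_rfl (htri _ _ _)
        _ ≤ e := by
            refine max_le hx1.le (max_le hy.le ?_)
            rw [hsymm]; exact hx2.le
    have hge : e ≤ dY (f x1) (f x2) := by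
      by_contra h
      push_neg at h
      have : dY y1 y2 < e := by
        calc dY y1 y2 ≤ max (dY y1 (f x1)) (dY (f x1) y2) := htri _ _ _
          _ ≤ max (dY y1 (f x1)) (max (dY (f x1) (f x2)) (dY (f x2) y2)) :=
              max_le_max le_rfl (htri _ _ _)
          _ < e := by
              refine max_lt ?_ (max_lt h hx2)
              rw [hsymm]; exact hx1
      exact absurd hy (ne_of_lt this)
    exact le_antisymm hle hge
  exact ⟨hsurj, ⟨RelIso.ofSurjective φ hsurj, fun r => rfl⟩⟩
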